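/- Let B ≥ 2 be an integer, n ≥ 1, U ⊆ ℝ^n a convex set, and ε > 0. Suppose h : U → ℝ is bounded above on every compact subset of U and satisfies h((x_0+⋯+x_{B−1})/B) ≤ ε + (1/B)(h(x_0)+⋯+h(x_{B−1})) for all x_0,…,x_{B−1} ∈ U. Then there exists a convex function g : U → ℝ such that h(x) ≤ g(x) ≤ h(x) + κ_B(n)·ε for all x ∈ U, and there exists a convex function g_0 : U → ℝ such that |h(x) − g_0(x)| ≤ (κ_B(n)/2)·ε for all x ∈ U. -/

import Mathlib

open scoped BigOperators

/-- `κ_B(n) = ⌊log_B n⌋ + 1 + n/((B−1)·B^⌊log_B n⌋)`. -/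
noncomputable def kappa (B n : ℕ) : ℝ :=
  (⌊Real.logb B n⌋ : ℝ) + 1 +
    (n : ℝ) / (((B : ℝ) - 1) * (B : ℝ) ^ ⌊Real.logb B n⌋)

noncomputable def phi (B k : ℕ) : ℝ :=
  if k = 0 then 0 else (Nat.log B k : ℝ) + 1 + (k : ℝ) / (((B:ℝ) - 1) * (B:ℝ) ^ (Nat.log B k))

noncomputable def ell (B L : ℕ) (x : ℝ) : ℝ := (L : ℝ) + 1 + x / (((B:ℝ) - 1) * (B:ℝ) ^ L)

section phiFacts
variable {B : ℕ}

lemma Breal (hB : 2 ≤ B) : (2:ℝ) ≤ (B:ℝ) := by exact_mod_cast hB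
lemma Bm1pos (hB : 2 ≤ B) : (0:ℝ) < (B:ℝ) - 1 := by have := Breal hB; linarith
lemma Bpowpos (hB : 2 ≤ B) (L : ℕ) : (0:ℝ) < (B:ℝ) ^ L := by positivity
lemma denpos (hB : 2 ≤ B) (L : ℕ) : (0:ℝ) < ((B:ℝ) - 1) * (B:ℝ) ^ L :=
  mul_pos (Bm1pos hB) (Bpowpos hB L)

/-- `B*(B^d - 1) ≤ d*(B-1)*B^d` -/
lemma keyP (hB : 2 ≤ B) (d : ℕ) : (B:ℝ) * ((B:ℝ)^d - 1) ≤ (d:ℝ) * ((B:ℝ)-1) * (B:ℝ)^d := by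
  have hb := Breal hB
  induction d with
  | zero => simp
  | succ d ih =>
    have hp := Bpowpos hB d
    have h1 : (1:ℝ) ≤ (B:ℝ)^d := one_le_pow₀ (by linarith)
    have ihB : (B:ℝ) * ((B:ℝ) * ((B:ℝ)^d - 1)) ≤ (B:ℝ) * ((d:ℝ) * ((B:ℝ)-1) * (B:ℝ)^d) :=
      mul_le_mul_of_nonneg_left ih (by linarith)
    have h2 : (0:ℝ) ≤ ((B:ℝ)-1) * (B:ℝ) * ((B:ℝ)^d - 1) :=
      mul_nonneg (mul_nonneg (by linarith) (by linarith)) (by linarith)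
    push_cast
    rw [pow_succ]
    nlinarith [ihB, h2]

/-- Bernoulli: `1 + d*(B-1) ≤ B^d` -/
lemma keyQ (hB : 2 ≤ B) (d : ℕ) : 1 + (d:ℝ) * ((B:ℝ)-1) ≤ (B:ℝ)^d := by
  have hb := Breal hB
  have h := one_add_mul_le_pow (a := (B:ℝ)-1) (by linarith) d
  have e : (1:ℝ) + ((B:ℝ)-1) = (B:ℝ) := by ring
  rw [e] at h
  linarith

lemma phi_le_ell (hB : 2 ≤ B) (k L' : ℕ) : phi B k ≤ ell B L' k := by
  have hb := Breal hB
  rcases Nat.eq_zero_or_pos k with rfl | hk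
  · simp [phi, ell]
    positivity
  · have hk0 : k ≠ 0 := hk.ne'
    rw [phi, if_neg hk0, ell]
    obtain ⟨L, hL⟩ : ∃ L, Nat.log B k = L := ⟨_, rfl⟩
    rw [hL]
    have hklow : ((B:ℝ))^L ≤ (k:ℝ) := by
      rw [← hL]; exact_mod_cast Nat.pow_log_le_self B hk0
    have hkhigh : (k:ℝ) < (B:ℝ)^(L+1) := by
      rw [← hL]; exact_mod_cast Nat.lt_pow_succ_log_self (by omega : 1 < B) k
    have hknn : (0:ℝ) ≤ k := Nat.cast_nonneg k
    rcases le_or_gt L L' with hLL | hLL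
    · -- L ≤ L'
      obtain ⟨d, rfl⟩ : ∃ d, L' = L + d := ⟨L' - L, by omega⟩
      have hpL := Bpowpos hB L
      have hpd := Bpowpos hB d
      have h1d : (1:ℝ) ≤ (B:ℝ)^d := one_le_pow₀ (by linarith)
      have hden := denpos hB (L+d)
      have hdenL := denpos hB L
      have e1 : (k:ℝ) / (((B:ℝ)-1) * (B:ℝ)^L)
          = ((k:ℝ) * (B:ℝ)^d) / (((B:ℝ)-1) * (B:ℝ)^(L+d)) := by
        rw [div_eq_div_iff hdenL.ne' hden.ne', pow_add]; ring
      have expand : (k:ℝ) / (((B:ℝ)-1) * (B:ℝ)^L) - (k:ℝ) / (((B:ℝ)-1) * (B:ℝ)^(L+d))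
          = ((k:ℝ) * ((B:ℝ)^d - 1)) / (((B:ℝ)-1) * (B:ℝ)^(L+d)) := by
        rw [e1, div_sub_div_same]; ring_nf
      have key : (k:ℝ) * ((B:ℝ)^d - 1) ≤ (d:ℝ) * (((B:ℝ)-1) * (B:ℝ)^(L+d)) := by
        have h1 : (k:ℝ) * ((B:ℝ)^d - 1) ≤ (B:ℝ)^(L+1) * ((B:ℝ)^d - 1) :=
          mul_le_mul_of_nonneg_right hkhigh.le (by linarith)
        have h2 : (B:ℝ)^(L+1) * ((B:ℝ)^d - 1) ≤ (d:ℝ) * (((B:ℝ)-1) * (B:ℝ)^(L+d)) := by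
          have hP := keyP hB d
          have hPL : (B:ℝ)^L * ((B:ℝ) * ((B:ℝ)^d - 1))
              ≤ (B:ℝ)^L * ((d:ℝ) * ((B:ℝ)-1) * (B:ℝ)^d) :=
            mul_le_mul_of_nonneg_left hP hpL.le
          calc (B:ℝ)^(L+1) * ((B:ℝ)^d - 1) = (B:ℝ)^L * ((B:ℝ) * ((B:ℝ)^d - 1)) := by
                rw [pow_succ]; ring
          _ ≤ (B:ℝ)^L * ((d:ℝ) * ((B:ℝ)-1) * (B:ℝ)^d) := hPL
          _ = (d:ℝ) * (((B:ℝ)-1) * (B:ℝ)^(L+d)) := by rw [pow_add]; ring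
        linarith
      have hdd : ((k:ℝ) * ((B:ℝ)^d - 1)) / (((B:ℝ)-1) * (B:ℝ)^(L+d)) ≤ (d:ℝ) := by
        rw [div_le_iff₀ hden]; linarith
      push_cast
      linarith [expand, hdd]
    · -- L' < L
      obtain ⟨d, hd, rfl⟩ : ∃ d, 1 ≤ d ∧ L = L' + d :=
        ⟨L - L', by omega, by omega⟩
      have hpL' := Bpowpos hB L'
      have hpd := Bpowpos hB d
      have hden := denpos hB (L'+d)
      have hdenL' := denpos hB L'
      have e1 : (k:ℝ) / (((B:ℝ)-1) * (B:ℝ)^L')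
          = ((k:ℝ) * (B:ℝ)^d) / (((B:ℝ)-1) * (B:ℝ)^(L'+d)) := by
        rw [div_eq_div_iff hdenL'.ne' hden.ne', pow_add]; ring
      have expand : (k:ℝ) / (((B:ℝ)-1) * (B:ℝ)^L') - (k:ℝ) / (((B:ℝ)-1) * (B:ℝ)^(L'+d))
          = ((k:ℝ) * ((B:ℝ)^d - 1)) / (((B:ℝ)-1) * (B:ℝ)^(L'+d)) := by
        rw [e1, div_sub_div_same]; ring_nf
      have key : (d:ℝ) * (((B:ℝ)-1) * (B:ℝ)^(L'+d)) ≤ (k:ℝ) * ((B:ℝ)^d - 1) := by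
        have hQ := keyQ hB d
        have h1d : (1:ℝ) ≤ (B:ℝ)^d := one_le_pow₀ (by linarith)
        have hpLd := Bpowpos hB (L'+d)
        have h1 : (d:ℝ) * (((B:ℝ)-1) * (B:ℝ)^(L'+d)) ≤ (B:ℝ)^(L'+d) * ((B:ℝ)^d - 1) := by
          have := mul_le_mul_of_nonneg_left hQ hpLd.le
          nlinarith [this]
        have h2 : (B:ℝ)^(L'+d) * ((B:ℝ)^d - 1) ≤ (k:ℝ) * ((B:ℝ)^d - 1) :=
          mul_le_mul_of_nonneg_right hklow (by linarith)
        linarith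
      have hdd : (d:ℝ) ≤ ((k:ℝ) * ((B:ℝ)^d - 1)) / (((B:ℝ)-1) * (B:ℝ)^(L'+d)) := by
        rw [le_div_iff₀ hden]; linarith
      push_cast
      linarith [expand, hdd]



lemma phi_zero : phi B 0 = 0 := by simp [phi]

lemma phi_nonneg (hB : 2 ≤ B) (k : ℕ) : 0 ≤ phi B k := by
  rcases Nat.eq_zero_or_pos k with rfl | hk
  · simp [phi]
  · rw [phi, if_neg hk.ne']
    have h1 := denpos hB (Nat.log B k)
    positivity

lemma ell_mono (hB : 2 ≤ B) (L : ℕ) {x y : ℝ} (hxy : x ≤ y) : ell B L x ≤ ell B L y := by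
  unfold ell
  have hd := denpos hB L
  have : x / (((B:ℝ)-1) * (B:ℝ)^L) ≤ y / (((B:ℝ)-1) * (B:ℝ)^L) := by gcongr
  linarith

lemma phi_mono (hB : 2 ≤ B) {k k' : ℕ} (hkk : k ≤ k') : phi B k ≤ phi B k' := by
  rcases Nat.eq_zero_or_pos k' with rfl | hk'
  · interval_cases k
    exact le_refl _
  · calc phi B k ≤ ell B (Nat.log B k') k := phi_le_ell hB k _
    _ ≤ ell B (Nat.log B k') k' := ell_mono hB _ (by exact_mod_cast hkk)
    _ = phi B k' := by rw [phi, if_neg hk'.ne', ell]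

lemma phi_one (hB : 2 ≤ B) : phi B 1 = (B:ℝ) / ((B:ℝ)-1) := by
  have hb := Bm1pos hB
  rw [phi, if_neg one_ne_zero, Nat.log_one_right]
  push_cast
  field_simp
  ring

lemma phi_le_linear (hB : 2 ≤ B) (k : ℕ) : phi B k ≤ (k:ℝ) * ((B:ℝ)/((B:ℝ)-1)) := by
  have hb := Breal hB
  have hb1 := Bm1pos hB
  rcases Nat.eq_zero_or_pos k with rfl | hk
  · simp [phi]
  · have h1 : (1:ℝ) ≤ (k:ℝ) := by exact_mod_cast hk
    calc phi B k ≤ ell B 0 k := phi_le_ell hB k 0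
    _ = 1 + (k:ℝ)/((B:ℝ)-1) := by rw [ell]; norm_num
    _ ≤ (k:ℝ) + (k:ℝ)/((B:ℝ)-1) := by linarith
    _ = (k:ℝ) * ((B:ℝ)/((B:ℝ)-1)) := by field_simp; ring

lemma sum_phi_le (hB : 2 ≤ B) {N : ℕ} (hN : 1 ≤ N) (s : Fin B → ℕ)
    (hs : ∑ j, s j ≤ N) : ∑ j, phi B (s j) ≤ (B:ℝ) * (phi B N - 1) := by
  have hb := Breal hB
  have hb1 := Bm1pos hB
  have hcast : ((∑ j, s j : ℕ) : ℝ) ≤ (N : ℝ) := by exact_mod_cast hs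
  have hsum : (∑ j, (s j : ℝ)) ≤ (N:ℝ) := by push_cast at hcast ⊢; exact hcast
  rcases Nat.eq_zero_or_pos (Nat.log B N) with hL | hL
  · -- L = 0
    have e1 : phi B N - 1 = (N:ℝ)/((B:ℝ)-1) := by
      rw [phi, if_neg (by omega), hL]
      push_cast; ring
    have point : ∀ j, phi B (s j) ≤ (s j : ℝ) * ((B:ℝ)/((B:ℝ)-1)) :=
      fun j => phi_le_linear hB (s j)
    calc ∑ j, phi B (s j) ≤ ∑ j, (s j:ℝ) * ((B:ℝ)/((B:ℝ)-1)) := Finset.sum_le_sum (fun j _ => point j)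
    _ = (∑ j, (s j:ℝ)) * ((B:ℝ)/((B:ℝ)-1)) := by rw [Finset.sum_mul]
    _ ≤ (N:ℝ) * ((B:ℝ)/((B:ℝ)-1)) := by
        apply mul_le_mul_of_nonneg_right hsum
        positivity
    _ = (B:ℝ) * ((N:ℝ)/((B:ℝ)-1)) := by ring
    _ = (B:ℝ) * (phi B N - 1) := by rw [e1]
  · -- L ≥ 1
    obtain ⟨L₀, hL₀⟩ : ∃ L₀, Nat.log B N = L₀ + 1 := ⟨Nat.log B N - 1, by omega⟩
    have hden := denpos hB L₀
    have e1 : phi B N - 1 = (L₀:ℝ) + 1 + (N:ℝ)/(((B:ℝ)-1)*(B:ℝ)^(L₀+1)) := by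
      rw [phi, if_neg (by omega), hL₀]
      push_cast; ring
    have point : ∀ j, phi B (s j) ≤ ell B L₀ (s j) := fun j => phi_le_ell hB (s j) L₀
    have hBne : (B:ℝ) ≠ 0 := by linarith
    calc ∑ j, phi B (s j) ≤ ∑ j, ell B L₀ (s j) := Finset.sum_le_sum (fun j _ => point j)
    _ = ∑ j, ((L₀:ℝ) + 1 + (s j:ℝ)/(((B:ℝ)-1)*(B:ℝ)^L₀)) := rfl
    _ = (B:ℝ) * ((L₀:ℝ)+1) + (∑ j, (s j:ℝ))/(((B:ℝ)-1)*(B:ℝ)^L₀) := by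
        rw [Finset.sum_add_distrib, Finset.sum_const, Finset.card_univ, Fintype.card_fin,
          ← Finset.sum_div]
        push_cast; ring
    _ ≤ (B:ℝ) * ((L₀:ℝ)+1) + (N:ℝ)/(((B:ℝ)-1)*(B:ℝ)^L₀) := by
        have : (∑ j, (s j:ℝ))/(((B:ℝ)-1)*(B:ℝ)^L₀) ≤ (N:ℝ)/(((B:ℝ)-1)*(B:ℝ)^L₀) := by
          gcongr
        linarith
    _ = (B:ℝ) * (phi B N - 1) := by
        rw [e1, pow_succ]
        field_simp

lemma kappa_eq_phi (hB : 2 ≤ B) {N : ℕ} (hN : 1 ≤ N) : kappa B N = phi B N := by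
  have hfloor : ⌊Real.logb B N⌋ = (Nat.log B N : ℤ) := by
    rw [Real.floor_logb_natCast (Nat.cast_nonneg N), Int.log_natCast]
  rw [kappa, phi, if_neg (by omega), hfloor]
  push_cast
  rw [zpow_natCast]
end phiFacts

lemma clamp_seg {a b l r : ℝ} (hab : a ≤ b) (hlr : l ≤ r) :
    max (min r b - max l a) 0 = max a (min b r) - max a (min b l) := by
  simp only [max_def, min_def]
  split_ifs <;> linarith

lemma tele_clamp {f : ℕ → ℝ} (hf : ∀ k, f k ≤ f (k+1)) (a b : ℝ) (hab : a ≤ b) (m : ℕ) :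
    ∑ k ∈ Finset.range m, max (min (f (k+1)) b - max (f k) a) 0
      = max a (min b (f m)) - max a (min b (f 0)) := by
  calc ∑ k ∈ Finset.range m, max (min (f (k+1)) b - max (f k) a) 0
      = ∑ k ∈ Finset.range m, (max a (min b (f (k+1))) - max a (min b (f k))) :=
        Finset.sum_congr rfl (fun k _ => clamp_seg hab (hf k))
  _ = max a (min b (f m)) - max a (min b (f 0)) :=
      Finset.sum_range_sub (fun k => max a (min b (f k))) m

lemma tele_clamp' {f : ℕ → ℝ} (hf : ∀ k, f k ≤ f (k+1)) (a b : ℝ) (hab : a ≤ b) (m : ℕ) :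
    ∑ k ∈ Finset.range m, max (min b (f (k+1)) - max a (f k)) 0
      = max a (min b (f m)) - max a (min b (f 0)) := by
  rw [← tele_clamp hf a b hab m]
  exact Finset.sum_congr rfl fun k _ => by rw [min_comm b (f (k+1)), max_comm a (f k)]

/-- the `(k,j)` bucket segment -/
noncomputable def seg (B : ℕ) (c : ℕ → ℝ) (k j : ℕ) : ℝ :=
  max (min (c (k+1)) ((((j+1) : ℕ) : ℝ)/(B:ℝ)) - max (c k) ((j : ℝ)/(B:ℝ))) 0

section buckets
variable {B m : ℕ} {c : ℕ → ℝ}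

lemma hBRR (hB : 2 ≤ B) : (0:ℝ) < (B:ℝ) := by
  have : (2:ℝ) ≤ (B:ℝ) := by exact_mod_cast hB
  linarith

lemma jstep (hB : 2 ≤ B) : ∀ j : ℕ, ((j : ℝ)/(B:ℝ)) ≤ (((j+1 : ℕ)) : ℝ)/(B:ℝ) := by
  intro j
  exact (div_le_div_iff_of_pos_right (hBRR hB)).mpr (by exact_mod_cast Nat.le_succ j)

lemma seg_nonneg (k j : ℕ) : 0 ≤ seg B c k j := le_max_right _ 0

lemma bucket_sum_one (hB : 2 ≤ B) (hc_mono : Monotone c)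
    (hc0 : c 0 = 0) (hcm : c m = 1) {j : ℕ} (hj : j < B) :
    ∑ k ∈ Finset.range m, seg B c k j = 1/(B:ℝ) := by
  have hBR := hBRR hB
  have hstep : ∀ k, c k ≤ c (k+1) := fun k => hc_mono (Nat.le_succ k)
  have hab := jstep hB j
  have tc := tele_clamp hstep ((j : ℝ)/(B:ℝ)) ((((j+1) : ℕ) : ℝ)/(B:ℝ)) hab m
  simp only [seg]
  rw [tc, hc0, hcm]
  have h1 : (((j+1 : ℕ)) : ℝ)/(B:ℝ) ≤ 1 := by
    rw [div_le_one hBR]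
    exact_mod_cast Nat.succ_le_of_lt hj
  have h2 : (0:ℝ) ≤ ((j : ℝ)/(B:ℝ)) := by positivity
  rw [min_eq_left h1, max_eq_right hab, min_eq_right (le_trans h2 hab), max_eq_left h2]
  push_cast
  field_simp
  ring

lemma bucket_weight (hB : 2 ≤ B) (hc_mono : Monotone c) (hc_nonneg : ∀ k, 0 ≤ c k)
    {k : ℕ} (hck1 : c (k+1) ≤ 1) :
    ∑ j ∈ Finset.range B, seg B c k j = c (k+1) - c k := by
  have hBR := hBRR hB
  have hBne : (B:ℝ) ≠ 0 := hBR.ne'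
  have hstep : c k ≤ c (k+1) := hc_mono (Nat.le_succ k)
  have tc := tele_clamp' (f := fun j : ℕ => ((j:ℝ)/(B:ℝ))) (jstep hB) (c k) (c (k+1)) hstep B
  simp only [seg]
  rw [tc]
  have e1 : ((B:ℕ):ℝ)/(B:ℝ) = 1 := div_self hBne
  have e2 : ((0:ℕ):ℝ)/(B:ℝ) = 0 := by norm_num
  rw [e1, e2, min_eq_left hck1, max_eq_right hstep, min_eq_right (hc_nonneg (k+1)),
    max_eq_left (hc_nonneg k)]

lemma seg_pos_lt {k j : ℕ} (hpos : 0 < seg B c k j) :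
    max (c k) ((j:ℝ)/(B:ℝ)) < min (c (k+1)) ((((j+1):ℕ):ℝ)/(B:ℝ)) := by
  by_contra hcon
  push_neg at hcon
  have hD : min (c (k+1)) ((((j+1):ℕ):ℝ)/(B:ℝ)) - max (c k) ((j:ℝ)/(B:ℝ)) ≤ 0 :=
    sub_nonpos.mpr hcon
  have : seg B c k j = 0 := max_eq_right hD
  rw [this] at hpos
  exact lt_irrefl 0 hpos

lemma bucket_count (hB : 2 ≤ B) (hc_mono : Monotone c) (hc_nonneg : ∀ k, 0 ≤ c k) (m : ℕ) :
    ∑ j ∈ Finset.range B, ((Finset.range m).filter fun k => 0 < seg B c k j).card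
      ≤ m + (B - 1) := by
  classical
  have hBR := hBRR hB
  set P : Finset (ℕ × ℕ) :=
    (Finset.range m ×ˢ Finset.range B).filter (fun p => 0 < seg B c p.1 p.2) with hP
  have step1 : ∑ j ∈ Finset.range B,
      ((Finset.range m).filter fun k => 0 < seg B c k j).card = P.card := by
    rw [Finset.card_eq_sum_card_fiberwise (f := Prod.snd) (t := Finset.range B)
      (fun p hp => (Finset.mem_product.mp (Finset.mem_filter.mp hp).1).2)]
    apply Finset.sum_congr rfl
    intro j hj
    apply Finset.card_bij' (fun k _ => ((k, j) : ℕ × ℕ)) (fun p _ => p.1)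
    · intro k hk
      have hk' := Finset.mem_filter.mp hk
      exact Finset.mem_filter.mpr
        ⟨Finset.mem_filter.mpr ⟨Finset.mem_product.mpr ⟨hk'.1, hj⟩, hk'.2⟩, rfl⟩
    · intro p hp
      have hp' := Finset.mem_filter.mp hp
      have hp1 := Finset.mem_filter.mp hp'.1
      refine Finset.mem_filter.mpr ⟨(Finset.mem_product.mp hp1.1).1, ?_⟩
      rw [← hp'.2]
      exact hp1.2
    · intro k hk; rfl
    · rintro ⟨p1, p2⟩ hp
      have hp' := Finset.mem_filter.mp hp
      simp only at hp'
      rw [hp'.2]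
  rw [step1]
  set T : Finset ℝ := ((Finset.range m).image fun k => c k) ∪
    ((Finset.Icc 1 (B-1)).image fun j : ℕ => (j:ℝ)/(B:ℝ)) with hT
  have hTcard : T.card ≤ m + (B - 1) := by
    calc T.card ≤ ((Finset.range m).image fun k => c k).card
        + ((Finset.Icc 1 (B-1)).image fun j : ℕ => (j:ℝ)/(B:ℝ)).card := Finset.card_union_le _ _
    _ ≤ m + (B-1) := by
        apply Nat.add_le_add
        · exact le_trans (Finset.card_image_le) (by rw [Finset.card_range])
        · exact le_trans (Finset.card_image_le) (by rw [Nat.card_Icc]; omega)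
  refine le_trans (Finset.card_le_card_of_injOn (fun p => max (c p.1) ((p.2:ℝ)/(B:ℝ))) ?_ ?_) hTcard
  · -- maps into T
    rintro ⟨k, j⟩ hp
    simp only [hP, Finset.mem_coe, Finset.mem_filter, Finset.mem_product, Finset.mem_range] at hp
    obtain ⟨⟨hkm, hjB⟩, hpos⟩ := hp
    show max (c k) ((j:ℝ)/(B:ℝ)) ∈ T
    rcases le_total ((j:ℝ)/(B:ℝ)) (c k) with hle | hle
    · rw [max_eq_left hle]
      exact Finset.mem_union_left _ (Finset.mem_image.mpr ⟨k, Finset.mem_range.mpr hkm, rfl⟩)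
    · rw [max_eq_right hle]
      rcases Nat.eq_zero_or_pos j with rfl | hj1
      · have : ((0:ℕ):ℝ)/(B:ℝ) = 0 := by norm_num
        rw [this]
        rw [this] at hle
        have : c k = 0 := le_antisymm hle (hc_nonneg k)
        rw [← this]
        exact Finset.mem_union_left _ (Finset.mem_image.mpr ⟨k, Finset.mem_range.mpr hkm, rfl⟩)
      · exact Finset.mem_union_right _ (Finset.mem_image.mpr
          ⟨j, Finset.mem_Icc.mpr ⟨hj1, by omega⟩, rfl⟩)
  · -- injective on P
    rintro ⟨k, j⟩ hp ⟨k', j'⟩ hq heq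
    simp only [hP, Finset.coe_filter, Set.mem_setOf_eq, Finset.mem_coe,
      Finset.mem_product, Finset.mem_range] at hp hq
    obtain ⟨-, hpos⟩ := hp
    obtain ⟨-, hqos⟩ := hq
    have heq' : max (c k) ((j:ℝ)/(B:ℝ)) = max (c k') ((j':ℝ)/(B:ℝ)) := heq
    have hlt := seg_pos_lt hpos
    have hlt' := seg_pos_lt hqos
    have h1 : c k ≤ max (c k) ((j:ℝ)/(B:ℝ)) := le_max_left _ _
    have h2 : (j:ℝ)/(B:ℝ) ≤ max (c k) ((j:ℝ)/(B:ℝ)) := le_max_right _ _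
    have h3 : max (c k) ((j:ℝ)/(B:ℝ)) < c (k+1) := lt_of_lt_of_le hlt (min_le_left _ _)
    have h4 : max (c k) ((j:ℝ)/(B:ℝ)) < (((j+1):ℕ):ℝ)/(B:ℝ) :=
      lt_of_lt_of_le hlt (min_le_right _ _)
    have h1' : c k' ≤ max (c k) ((j:ℝ)/(B:ℝ)) := by rw [heq']; exact le_max_left _ _
    have h2' : (j':ℝ)/(B:ℝ) ≤ max (c k) ((j:ℝ)/(B:ℝ)) := by rw [heq']; exact le_max_right _ _
    have h3' : max (c k) ((j:ℝ)/(B:ℝ)) < c (k'+1) := by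
      rw [heq']; exact lt_of_lt_of_le hlt' (min_le_left _ _)
    have h4' : max (c k) ((j:ℝ)/(B:ℝ)) < (((j'+1):ℕ):ℝ)/(B:ℝ) := by
      rw [heq']; exact lt_of_lt_of_le hlt' (min_le_right _ _)
    have hkk : k = k' := by
      by_contra hne
      rcases lt_or_gt_of_ne hne with hlt2 | hlt2
      · have : c (k+1) ≤ c k' := hc_mono (by omega)
        linarith
      · have : c (k'+1) ≤ c k := hc_mono (by omega)
        linarith
    have hjj : j = j' := by
      by_contra hne
      rcases lt_or_gt_of_ne hne with hlt2 | hlt2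
      · have : (((j+1):ℕ):ℝ)/(B:ℝ) ≤ ((j':ℕ):ℝ)/(B:ℝ) :=
          (div_le_div_iff_of_pos_right hBR).mpr (by exact_mod_cast hlt2)
        linarith
      · have : (((j'+1):ℕ):ℝ)/(B:ℝ) ≤ ((j:ℕ):ℝ)/(B:ℝ) :=
          (div_le_div_iff_of_pos_right hBR).mpr (by exact_mod_cast hlt2)
        linarith
    simp [hkk, hjj]

end buckets

theorem bigM {B n : ℕ} (hB : 2 ≤ B) {U : Set (Fin n → ℝ)} (hUconv : Convex ℝ U)
    {ε : ℝ} (hε : 0 < ε) {h : (Fin n → ℝ) → ℝ}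
    (hbdd : ∀ K ⊆ U, IsCompact K → ∃ M : ℝ, ∀ x ∈ K, h x ≤ M)
    (hac : ∀ y : Fin B → (Fin n → ℝ), (∀ i, y i ∈ U) →
      h ((B : ℝ)⁻¹ • ∑ i, y i) ≤ ε + (1 / (B : ℝ)) * ∑ i, h (y i)) :
    ∀ A : Finset (Fin n → ℝ), ↑A ⊆ U →
      ∀ w : (Fin n → ℝ) → ℝ, (∀ x ∈ A, 0 < w x) → (∑ x ∈ A, w x) = 1 →
      h (∑ x ∈ A, w x • x) ≤ phi B (A.card - 1) * ε + ∑ x ∈ A, w x * h x := by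
  classical
  have hBR : (0:ℝ) < (B:ℝ) := hBRR hB
  have hBne : (B:ℝ) ≠ 0 := hBR.ne'
  intro A
  induction A using Finset.strongInduction with
  | _ A IH =>
  intro hAU w hwpos hwsum
  have hAne : A.Nonempty := by
    rcases Finset.eq_empty_or_nonempty A with rfl | hne
    · simp at hwsum
    · exact hne
  obtain ⟨m, hm⟩ : ∃ m, A.card = m := ⟨_, rfl⟩
  rcases Nat.lt_or_ge m 2 with hm1 | hm2
  · -- base case : A is a singleton
    have hm1' : A.card = 1 := by
      have := Finset.card_pos.mpr hAne
      omega
    obtain ⟨x0, hx0⟩ := Finset.card_eq_one.mp hm1'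
    subst hx0
    simp only [Finset.sum_singleton] at hwsum ⊢
    rw [hm1', hwsum]
    simp [phi_zero, one_smul]
  -- main case : m ≥ 2
  set S : Set ℝ := {d | ∃ w' : (Fin n → ℝ) → ℝ, (∀ x ∈ A, 0 < w' x) ∧
      (∑ x ∈ A, w' x) = 1 ∧
      d = h (∑ x ∈ A, w' x • x) - ∑ x ∈ A, w' x * h x} with hSdef
  have hSmem : ∀ w' : (Fin n → ℝ) → ℝ, (∀ x ∈ A, 0 < w' x) → (∑ x ∈ A, w' x) = 1 →
      (h (∑ x ∈ A, w' x • x) - ∑ x ∈ A, w' x * h x) ∈ S := by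
    intro w' h1 h2
    exact ⟨w', h1, h2, rfl⟩
  have hSne : S.Nonempty := ⟨_, hSmem w hwpos hwsum⟩
  have hSbdd : BddAbove S := by
    obtain ⟨M, hM⟩ := hbdd (convexHull ℝ (↑A : Set (Fin n → ℝ)))
      (convexHull_min hAU hUconv) ((A.finite_toSet).isCompact_convexHull ℝ)
    refine ⟨M - A.inf' hAne h, ?_⟩
    rintro d ⟨w', hpos, hsum, rfl⟩
    have hmem : (∑ x ∈ A, w' x • x) ∈ convexHull ℝ (↑A : Set (Fin n → ℝ)) :=
      (convex_convexHull ℝ _).sum_mem (fun x hx => (hpos x hx).le) hsum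
        (fun x hx => subset_convexHull ℝ _ hx)
    have h1 : h (∑ x ∈ A, w' x • x) ≤ M := hM _ hmem
    have h2 : A.inf' hAne h ≤ ∑ x ∈ A, w' x * h x := by
      calc A.inf' hAne h = ∑ x ∈ A, w' x * A.inf' hAne h := by
            rw [← Finset.sum_mul, hsum, one_mul]
      _ ≤ ∑ x ∈ A, w' x * h x := by
            apply Finset.sum_le_sum
            intro x hx
            exact mul_le_mul_of_nonneg_left (Finset.inf'_le h hx) (hpos x hx).le
    linarith
  have key : ∀ w' : (Fin n → ℝ) → ℝ, (∀ x ∈ A, 0 < w' x) → (∑ x ∈ A, w' x) = 1 →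
      h (∑ x ∈ A, w' x • x) - ∑ x ∈ A, w' x * h x ≤
        max (phi B (m - 1) * ε) (ε + (1 / (B:ℝ)) * sSup S) := by
    intro w' hpos hsum
    set e : {x // x ∈ A} ≃ Fin m := Finset.equivFinOfCardEq hm with he
    set u : ℕ → ℝ := fun k =>
      if hk : k < m then w' ((e.symm ⟨k, hk⟩ : {x // x ∈ A}) : Fin n → ℝ) else 0 with hu
    set c : ℕ → ℝ := fun k => ∑ i ∈ Finset.range k, u i with hc
    have hu_nonneg : ∀ k, 0 ≤ u k := by
      intro k
      rw [hu]
      dsimp only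
      split
      · next hk => exact (hpos _ (e.symm ⟨k, hk⟩).2).le
      · exact le_refl 0
    have hc_succ : ∀ k, c (k+1) = c k + u k := fun k => Finset.sum_range_succ u k
    have hc_mono : Monotone c := by
      apply monotone_nat_of_le_succ
      intro k
      rw [hc_succ]
      linarith [hu_nonneg k]
    have hc0 : c 0 = 0 := by simp [hc]
    have hc_nonneg : ∀ k, 0 ≤ c k := fun k => hc0 ▸ hc_mono (Nat.zero_le k)
    have hsumA : ∀ G : (Fin n → ℝ) → ℝ,
        ∑ x ∈ A, G x = ∑ i : Fin m, G ((e.symm i : {x // x ∈ A}) : Fin n → ℝ) := by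
      intro G
      rw [← Finset.sum_coe_sort A G, ← Equiv.sum_comp e.symm (fun a : {x // x ∈ A} => G a)]
    have huval : ∀ i : Fin m, u (i : ℕ) = w' ((e.symm i : {x // x ∈ A}) : Fin n → ℝ) := by
      intro i
      rw [hu]
      dsimp only
      rw [dif_pos i.isLt]
    have hcm : c m = 1 := by
      rw [hc]
      dsimp only
      rw [← Fin.sum_univ_eq_sum_range (fun i => u i) m]
      rw [Finset.sum_congr rfl fun i _ => huval i, ← hsumA, hsum]
    have hc_le_one : ∀ k, k ≤ m → c k ≤ 1 := fun k hk => hcm ▸ hc_mono hk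
    set W : Fin B → (Fin n → ℝ) → ℝ := fun j x =>
      if hx : x ∈ A then (B:ℝ) * seg B c ((e ⟨x, hx⟩ : Fin m) : ℕ) (j : ℕ) else 0 with hW
    have hW_nonneg : ∀ j x, 0 ≤ W j x := by
      intro j x
      rw [hW]
      dsimp only
      split
      · exact mul_nonneg hBR.le (seg_nonneg _ _)
      · exact le_refl 0
    have hWval : ∀ (j : Fin B) (i : Fin m),
        W j ((e.symm i : {x // x ∈ A}) : Fin n → ℝ) = (B:ℝ) * seg B c (i : ℕ) (j : ℕ) := by
      intro j i
      rw [hW]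
      dsimp only
      rw [dif_pos (e.symm i).2]
      congr 3
      rw [Subtype.coe_eta, Equiv.apply_symm_apply]
    have hWvalx : ∀ (j : Fin B) (x : Fin n → ℝ) (hx : x ∈ A),
        W j x = (B:ℝ) * seg B c ((e ⟨x, hx⟩ : Fin m) : ℕ) (j : ℕ) := by
      intro j x hx
      rw [hW]
      dsimp only
      rw [dif_pos hx]
    have hWsum1 : ∀ j : Fin B, ∑ x ∈ A, W j x = 1 := by
      intro j
      rw [hsumA (W j), Finset.sum_congr rfl fun i _ => hWval j i, ← Finset.mul_sum,
        Fin.sum_univ_eq_sum_range (fun k => seg B c k (j:ℕ)) m,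
        bucket_sum_one hB hc_mono hc0 hcm j.isLt]
      field_simp
    have hWtotal : ∀ (x : Fin n → ℝ) (hx : x ∈ A), ∑ j : Fin B, W j x = (B:ℝ) * w' x := by
      intro x hx
      rw [Finset.sum_congr rfl fun j _ => hWvalx j x hx, ← Finset.mul_sum]
      congr 1
      rw [Fin.sum_univ_eq_sum_range (fun j => seg B c ((e ⟨x, hx⟩ : Fin m) : ℕ) j) B]
      rw [bucket_weight hB hc_mono hc_nonneg (hc_le_one _ (e ⟨x, hx⟩).isLt)]
      rw [hc_succ, huval (e ⟨x, hx⟩), Equiv.symm_apply_apply]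
      ring
    set y : Fin B → (Fin n → ℝ) := fun j => ∑ x ∈ A, W j x • x with hy
    have hyU : ∀ j, y j ∈ U :=
      fun j => hUconv.sum_mem (fun x _ => hW_nonneg j x) (hWsum1 j) (fun x hx => hAU hx)
    have havg : (B:ℝ)⁻¹ • ∑ j, y j = ∑ x ∈ A, w' x • x := by
      rw [hy]
      dsimp only
      rw [Finset.sum_comm]
      rw [Finset.sum_congr rfl fun x hx => ((Finset.sum_smul).symm.trans
        (by rw [hWtotal x hx] : (∑ j : Fin B, W j x) • x = ((B:ℝ) * w' x) • x))]
      rw [Finset.smul_sum]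
      apply Finset.sum_congr rfl
      intro x hx
      rw [smul_smul, ← mul_assoc, inv_mul_cancel₀ hBne, one_mul]
    have key1 : h (∑ x ∈ A, w' x • x) ≤ ε + (1 / (B:ℝ)) * ∑ j, h (y j) := by
      rw [← havg]
      exact hac y hyU
    set Aj : Fin B → Finset (Fin n → ℝ) := fun j => A.filter (fun x => 0 < W j x) with hAj
    have hAjA : ∀ j, Aj j ⊆ A := fun j => Finset.filter_subset _ _
    have hzero : ∀ (j : Fin B) (x : Fin n → ℝ), x ∈ A → x ∉ Aj j → W j x = 0 := by
      intro j x hx hnx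
      rw [hAj] at hnx
      simp only [Finset.mem_filter, not_and] at hnx
      exact le_antisymm (not_lt.mp (hnx hx)) (hW_nonneg j x)
    have hyjAj : ∀ j, y j = ∑ x ∈ Aj j, W j x • x := by
      intro j
      rw [hy]
      dsimp only
      rw [Finset.sum_subset (hAjA j)]
      intro x hx hnx
      rw [hzero j x hx hnx, zero_smul]
    have hAjsum : ∀ j, ∑ x ∈ Aj j, W j x = 1 := by
      intro j
      rw [← hWsum1 j]
      apply Finset.sum_subset (hAjA j)
      intro x hx hnx
      exact hzero j x hx hnx
    have hAjh : ∀ j, ∑ x ∈ Aj j, W j x * h x = ∑ x ∈ A, W j x * h x := by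
      intro j
      apply Finset.sum_subset (hAjA j)
      intro x hx hnx
      rw [hzero j x hx hnx, zero_mul]
    set s : Fin B → ℕ := fun j => (Aj j).card with hs
    have hseg_of_W : ∀ (j : Fin B) (x : Fin n → ℝ) (hx : x ∈ A),
        0 < W j x ↔ 0 < seg B c ((e ⟨x, hx⟩ : Fin m) : ℕ) (j : ℕ) := by
      intro j x hx
      rw [hWvalx j x hx]
      constructor
      · intro hp
        by_contra hn
        push_neg at hn
        nlinarith [hn, hBR]
      · intro hp
        exact mul_pos hBR hp
    have cardEq : ∀ j : Fin B,
        s j = ((Finset.range m).filter fun k => 0 < seg B c k (j:ℕ)).card := by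
      intro j
      rw [hs]
      dsimp only
      refine Finset.card_bij'
        (fun x hx => ((e ⟨x, (Finset.mem_filter.mp hx).1⟩ : Fin m) : ℕ))
        (fun k hk =>
          ((e.symm ⟨k, Finset.mem_range.mp (Finset.mem_filter.mp hk).1⟩ : {x // x ∈ A})
            : Fin n → ℝ)) ?_ ?_ ?_ ?_
      · intro x hx
        obtain ⟨hxA, hxpos⟩ := Finset.mem_filter.mp hx
        exact Finset.mem_filter.mpr ⟨Finset.mem_range.mpr (e ⟨x, hxA⟩).isLt,
          (hseg_of_W j x hxA).mp hxpos⟩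
      · intro k hk
        obtain ⟨hkr, hkpos⟩ := Finset.mem_filter.mp hk
        set i : Fin m := ⟨k, Finset.mem_range.mp hkr⟩ with hi
        refine Finset.mem_filter.mpr ⟨(e.symm i).2, ?_⟩
        rw [hWval j i]
        exact mul_pos hBR hkpos
      · intro x hx
        simp only [Subtype.coe_eta, Fin.eta, Equiv.symm_apply_apply]
      · intro k hk
        simp only [Subtype.coe_eta, Equiv.apply_symm_apply]
    have countsum : ∑ j : Fin B, s j ≤ m + (B - 1) := by
      rw [Finset.sum_congr rfl fun j _ => cardEq j]
      rw [Fin.sum_univ_eq_sum_range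
        (fun j => ((Finset.range m).filter fun k => 0 < seg B c k j).card) B]
      exact bucket_count hB hc_mono hc_nonneg m
    have sj1 : ∀ j, 1 ≤ s j := by
      intro j
      rw [hs]
      dsimp only
      rw [Nat.one_le_iff_ne_zero, ← Nat.pos_iff_ne_zero, Finset.card_pos]
      by_contra hemp
      rw [Finset.not_nonempty_iff_eq_empty] at hemp
      have : ∑ x ∈ Aj j, W j x = 0 := by rw [hemp]; simp
      rw [hAjsum j] at this
      norm_num at this
    set DS : Fin B → ℝ := fun j => h (y j) - ∑ x ∈ A, W j x * h x with hDS
    have hIH : ∀ j : Fin B, Aj j ≠ A → DS j ≤ phi B (s j - 1) * ε := by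
      intro j hne
      have hss : Aj j ⊂ A := HasSubset.Subset.ssubset_of_ne (hAjA j) hne
      have := IH (Aj j) hss (fun x hx => hAU (hAjA j hx)) (W j)
        (fun x hx => (Finset.mem_filter.mp hx).2) (hAjsum j)
      rw [hDS]
      dsimp only
      rw [← hAjh j]
      rw [hyjAj j]
      rw [hs]
      dsimp only
      linarith
    have main1 : h (∑ x ∈ A, w' x • x) - ∑ x ∈ A, w' x * h x
        ≤ ε + (1 / (B:ℝ)) * ∑ j : Fin B, DS j := by
      have e1 : ∑ j : Fin B, h (y j) = (∑ j : Fin B, DS j) + ∑ j : Fin B, ∑ x ∈ A, W j x * h x := by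
        rw [← Finset.sum_add_distrib]
        apply Finset.sum_congr rfl
        intro j _
        rw [hDS]
        dsimp only
        ring
      have e2 : ∑ j : Fin B, ∑ x ∈ A, W j x * h x = (B:ℝ) * ∑ x ∈ A, w' x * h x := by
        rw [Finset.sum_comm, Finset.mul_sum]
        apply Finset.sum_congr rfl
        intro x hx
        rw [← Finset.sum_mul, hWtotal x hx]
        ring
      have := key1
      rw [e1, e2] at this
      have e3 : (1 / (B:ℝ)) * ((∑ j : Fin B, DS j) + (B:ℝ) * ∑ x ∈ A, w' x * h x)
          = (1 / (B:ℝ)) * (∑ j : Fin B, DS j) + ∑ x ∈ A, w' x * h x := by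
        field_simp
        try ring
      rw [e3] at this
      linarith
    by_cases hfull : ∃ j0 : Fin B, Aj j0 = A
    · -- one full bucket
      obtain ⟨j0, hj0⟩ := hfull
      have hsj0 : s j0 = m := by rw [hs]; dsimp only; rw [hj0, hm]
      have herase : ∀ j1 : Fin B, j1 ≠ j0 → s j0 + s j1 + (B - 2) ≤ ∑ j : Fin B, s j := by
        intro j1 hne
        have e1 : ∑ j : Fin B, s j = s j0 + ∑ j ∈ Finset.univ.erase j0, s j :=
          (Finset.add_sum_erase _ s (Finset.mem_univ j0)).symm
        have hj1mem : j1 ∈ Finset.univ.erase j0 := Finset.mem_erase.mpr ⟨hne, Finset.mem_univ _⟩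
        have e2 : ∑ j ∈ Finset.univ.erase j0, s j
            = s j1 + ∑ j ∈ (Finset.univ.erase j0).erase j1, s j :=
          (Finset.add_sum_erase _ s hj1mem).symm
        have e3 : (B - 2) ≤ ∑ j ∈ (Finset.univ.erase j0).erase j1, s j := by
          have hcard : ((Finset.univ.erase j0).erase j1).card = B - 2 := by
            rw [Finset.card_erase_of_mem hj1mem, Finset.card_erase_of_mem (Finset.mem_univ j0),
              Finset.card_univ, Fintype.card_fin]
            omega
          have h9 := Finset.card_nsmul_le_sum ((Finset.univ.erase j0).erase j1) s 1
            (fun x _ => sj1 x)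
          rw [hcard, smul_eq_mul, mul_one] at h9
          exact h9
        omega
      have hsj : ∀ j : Fin B, j ≠ j0 → s j = 1 := by
        intro j hne
        have := herase j hne
        have := sj1 j
        omega
      have hDSother : ∀ j : Fin B, j ≠ j0 → DS j ≤ 0 := by
        intro j hne
        have hAjne : Aj j ≠ A := by
          intro heq
          have : s j = m := by rw [hs]; dsimp only; rw [heq, hm]
          rw [hsj j hne] at this
          omega
        have := hIH j hAjne
        rw [hsj j hne] at this
        simpa [phi_zero] using this
      have hDSj0 : DS j0 ≤ sSup S := by
        apply le_csSup hSbdd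
        rw [hDS]
        dsimp only
        rw [hy]
        dsimp only
        apply hSmem (W j0)
        · intro x hx
          have : x ∈ Aj j0 := by rw [hj0]; exact hx
          exact (Finset.mem_filter.mp this).2
        · exact hWsum1 j0
      have hsum_DS : ∑ j : Fin B, DS j ≤ sSup S := by
        have e1 : ∑ j : Fin B, DS j = DS j0 + ∑ j ∈ Finset.univ.erase j0, DS j :=
          (Finset.add_sum_erase _ DS (Finset.mem_univ j0)).symm
        have e2 : ∑ j ∈ Finset.univ.erase j0, DS j ≤ 0 := by
          apply Finset.sum_nonpos
          intro j hj
          exact hDSother j (Finset.mem_erase.mp hj).1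
        linarith
      refine le_trans ?_ (le_max_right _ _)
      have : (1 / (B:ℝ)) * ∑ j : Fin B, DS j ≤ (1 / (B:ℝ)) * sSup S :=
        mul_le_mul_of_nonneg_left hsum_DS (by positivity)
      linarith [main1]
    · -- no full bucket
      push_neg at hfull
      have hsum_DS : ∑ j : Fin B, DS j ≤ (B:ℝ) * (phi B (m-1) - 1) * ε := by
        calc ∑ j : Fin B, DS j ≤ ∑ j : Fin B, phi B (s j - 1) * ε :=
            Finset.sum_le_sum (fun j _ => hIH j (hfull j))
        _ = (∑ j : Fin B, phi B (s j - 1)) * ε := by rw [Finset.sum_mul]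
        _ ≤ ((B:ℝ) * (phi B (m-1) - 1)) * ε := by
            apply mul_le_mul_of_nonneg_right ?_ hε.le
            apply sum_phi_le hB (by omega : 1 ≤ m - 1)
            have e4 : ∑ j : Fin B, (s j - 1) + B = ∑ j : Fin B, s j := by
              have : ∀ j : Fin B, (s j - 1) + 1 = s j := fun j => by
                have := sj1 j; omega
              calc ∑ j : Fin B, (s j - 1) + B
                  = ∑ j : Fin B, (s j - 1) + ∑ _j : Fin B, 1 := by
                    rw [Finset.sum_const, Finset.card_univ, Fintype.card_fin, smul_eq_mul, mul_one]
              _ = ∑ j : Fin B, ((s j - 1) + 1) := (Finset.sum_add_distrib).symm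
              _ = ∑ j : Fin B, s j := Finset.sum_congr rfl fun j _ => this j
            omega
        _ = (B:ℝ) * (phi B (m-1) - 1) * ε := by ring
      refine le_trans ?_ (le_max_left _ _)
      have e5 : (1 / (B:ℝ)) * ((B:ℝ) * (phi B (m-1) - 1) * ε) = (phi B (m-1) - 1) * ε := by
        field_simp
        try ring
      have : (1 / (B:ℝ)) * ∑ j : Fin B, DS j ≤ (1 / (B:ℝ)) * ((B:ℝ) * (phi B (m-1) - 1) * ε) :=
        mul_le_mul_of_nonneg_left hsum_DS (by positivity)
      rw [e5] at this
      have := main1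
      linarith
  -- wrap up using the supremum
  have hSup_le : sSup S ≤ max (phi B (m - 1) * ε) (ε + (1 / (B:ℝ)) * sSup S) := by
    apply csSup_le hSne
    rintro d ⟨w', h1, h2, rfl⟩
    exact key w' h1 h2
  have hSup : sSup S ≤ phi B (m - 1) * ε := by
    rcases le_max_iff.mp hSup_le with hc1 | hc2
    · exact hc1
    · have hBm1 : (0:ℝ) < (B:ℝ) - 1 := Bm1pos hB
      have e6 : (ε + (1 / (B:ℝ)) * sSup S) * (B:ℝ) = ε * B + sSup S := by
        field_simp
        try ring
      have h7 : sSup S * (B:ℝ) ≤ ε * B + sSup S := by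
        calc sSup S * (B:ℝ) ≤ (ε + (1 / (B:ℝ)) * sSup S) * (B:ℝ) :=
            mul_le_mul_of_nonneg_right hc2 hBR.le
        _ = ε * B + sSup S := e6
      have h8 : sSup S ≤ (B:ℝ)/((B:ℝ)-1) * ε := by
        rw [div_mul_eq_mul_div, le_div_iff₀ hBm1]
        nlinarith
      calc sSup S ≤ (B:ℝ)/((B:ℝ)-1) * ε := h8
      _ = phi B 1 * ε := by rw [phi_one hB]
      _ ≤ phi B (m-1) * ε := mul_le_mul_of_nonneg_right (phi_mono hB (by omega)) hε.le
  have hmem := hSmem w hwpos hwsum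
  have := le_csSup hSbdd hmem
  rw [hm]
  linarith

lemma sum_union_ite_left {α M : Type*} [DecidableEq α] [AddCommMonoid M]
    (A1 A2 : Finset α) (F : α → M) :
    ∑ x ∈ A1 ∪ A2, (if x ∈ A1 then F x else 0) = ∑ x ∈ A1, F x := by
  rw [← Finset.sum_subset (Finset.subset_union_left (s₂ := A2)) (fun x _ hx => if_neg hx)]
  exact Finset.sum_congr rfl fun x hx => if_pos hx

lemma sum_union_ite_right {α M : Type*} [DecidableEq α] [AddCommMonoid M]
    (A1 A2 : Finset α) (F : α → M) :
    ∑ x ∈ A1 ∪ A2, (if x ∈ A2 then F x else 0) = ∑ x ∈ A2, F x := by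
  rw [← Finset.sum_subset (Finset.subset_union_right (s₁ := A1)) (fun x _ hx => if_neg hx)]
  exact Finset.sum_congr rfl fun x hx => if_pos hx

lemma caratheodory_reduce {n : ℕ} (h : (Fin n → ℝ) → ℝ) {A : Finset (Fin n → ℝ)}
    {w : (Fin n → ℝ) → ℝ}
    (hpos : ∀ x ∈ A, 0 < w x) (hsum : ∑ x ∈ A, w x = 1) (hcard : n + 2 ≤ A.card) :
    ∃ (A' : Finset (Fin n → ℝ)) (w' : (Fin n → ℝ) → ℝ), A' ⊆ A ∧ A'.card < A.card ∧
      (∀ x ∈ A', 0 < w' x) ∧ (∑ x ∈ A', w' x) = 1 ∧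
      (∑ x ∈ A', w' x • x) = (∑ x ∈ A, w x • x) ∧
      (∑ x ∈ A', w' x * h x) ≤ ∑ x ∈ A, w x * h x := by
  classical
  have hrel := FiniteDimensional.exists_relation_sum_zero_pos_coefficient_of_finrank_succ_lt_card
    (L := ℝ) (W := Fin n → ℝ) (t := A)
    (by rw [Module.finrank_fin_fun]; omega)
  obtain ⟨f0, hf0rel, hf0sum, hf0pos⟩ := hrel
  have hflip : ∃ f : (Fin n → ℝ) → ℝ, (∑ x ∈ A, f x • x) = 0 ∧ (∑ x ∈ A, f x) = 0 ∧
      (∃ x ∈ A, 0 < f x) ∧ 0 ≤ ∑ x ∈ A, f x * h x := by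
    rcases le_total 0 (∑ x ∈ A, f0 x * h x) with hge | hle
    · exact ⟨f0, hf0rel, hf0sum, hf0pos, hge⟩
    · refine ⟨fun x => -f0 x, ?_, ?_, ?_, ?_⟩
      · simp only [neg_smul, Finset.sum_neg_distrib, hf0rel, neg_zero]
      · simp only [Finset.sum_neg_distrib, hf0sum, neg_zero]
      · by_contra hno
        push_neg at hno
        obtain ⟨x0, hx0A, hx0⟩ := hf0pos
        have hlt : ∑ x ∈ A, (0:ℝ) < ∑ x ∈ A, f0 x := by
          apply Finset.sum_lt_sum
          · intro x hx
            have h5 : -f0 x ≤ 0 := hno x hx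
            linarith
          · exact ⟨x0, hx0A, hx0⟩
        rw [hf0sum, Finset.sum_const, smul_zero] at hlt
        exact lt_irrefl 0 hlt
      · simp only [neg_mul, Finset.sum_neg_distrib]
        linarith
  obtain ⟨f, hfrel, hfsum, hfex, hfh⟩ := hflip
  set P := A.filter (fun x => 0 < f x) with hP
  have hPne : P.Nonempty := by
    obtain ⟨x, hxa, hxp⟩ := hfex
    exact ⟨x, Finset.mem_filter.mpr ⟨hxa, hxp⟩⟩
  obtain ⟨x0, hx0P, hx0min⟩ := P.exists_min_image (fun x => w x / f x) hPne
  obtain ⟨hx0A, hx0f⟩ := Finset.mem_filter.mp hx0P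
  set θ := w x0 / f x0 with hθ
  have hθpos : 0 < θ := div_pos (hpos x0 hx0A) hx0f
  set w' := fun x => w x - θ * f x with hw'
  have hw'nonneg : ∀ x ∈ A, 0 ≤ w' x := by
    intro x hx
    rw [hw']
    dsimp only
    rcases le_or_gt (f x) 0 with hf | hf
    · nlinarith [hpos x hx, hθpos]
    · have hxP : x ∈ P := Finset.mem_filter.mpr ⟨hx, hf⟩
      have hmin := hx0min x hxP
      rw [hθ] at *
      rw [le_div_iff₀ hf] at hmin
      linarith
  have hw'x0 : w' x0 = 0 := by
    rw [hw']
    dsimp only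
    rw [hθ]
    field_simp
    ring
  have hw'sum : ∑ x ∈ A, w' x = 1 := by
    rw [hw']
    dsimp only
    rw [Finset.sum_sub_distrib, ← Finset.mul_sum, hfsum, mul_zero, sub_zero, hsum]
  have hw'bar : ∑ x ∈ A, w' x • x = ∑ x ∈ A, w x • x := by
    rw [hw']
    dsimp only
    have e1 : ∀ x : Fin n → ℝ, (w x - θ * f x) • x = w x • x - θ • (f x • x) := by
      intro x
      rw [sub_smul, mul_smul]
    rw [Finset.sum_congr rfl fun x _ => e1 x, Finset.sum_sub_distrib, ← Finset.smul_sum,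
      hfrel, smul_zero, sub_zero]
  have hw'h : ∑ x ∈ A, w' x * h x ≤ ∑ x ∈ A, w x * h x := by
    have e2 : ∑ x ∈ A, w' x * h x = ∑ x ∈ A, w x * h x - θ * ∑ x ∈ A, f x * h x := by
      rw [hw']
      dsimp only
      rw [Finset.mul_sum, ← Finset.sum_sub_distrib]
      exact Finset.sum_congr rfl fun x _ => by ring
    rw [e2]
    nlinarith [hθpos, hfh]
  set A' := A.filter (fun x => 0 < w' x) with hA'
  have hA'sub : A' ⊆ A := Finset.filter_subset _ _
  have hzero' : ∀ x ∈ A, x ∉ A' → w' x = 0 := by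
    intro x hx hnx
    rw [hA'] at hnx
    simp only [Finset.mem_filter, not_and] at hnx
    exact le_antisymm (not_lt.mp (hnx hx)) (hw'nonneg x hx)
  have hx0nA' : x0 ∉ A' := by
    rw [hA']
    simp only [Finset.mem_filter, not_and]
    intro _
    rw [hw'x0]
    exact lt_irrefl 0
  have hcardlt : A'.card < A.card :=
    Finset.card_lt_card ((Finset.ssubset_iff_of_subset hA'sub).mpr ⟨x0, hx0A, hx0nA'⟩)
  refine ⟨A', w', hA'sub, hcardlt, fun x hx => (Finset.mem_filter.mp hx).2, ?_, ?_, ?_⟩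
  · rw [← hw'sum]
    exact Finset.sum_subset hA'sub (fun x hx hnx => hzero' x hx hnx)
  · rw [← hw'bar]
    exact Finset.sum_subset hA'sub (fun x hx hnx => by rw [hzero' x hx hnx, zero_smul])
  · calc ∑ x ∈ A', w' x * h x = ∑ x ∈ A, w' x * h x :=
        Finset.sum_subset hA'sub (fun x hx hnx => by rw [hzero' x hx hnx, zero_mul])
    _ ≤ ∑ x ∈ A, w x * h x := hw'h

lemma allCombos {B n : ℕ} (hB : 2 ≤ B) {U : Set (Fin n → ℝ)} (hUconv : Convex ℝ U)
    {ε : ℝ} (hε : 0 < ε) {h : (Fin n → ℝ) → ℝ}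
    (hbdd : ∀ K ⊆ U, IsCompact K → ∃ M : ℝ, ∀ x ∈ K, h x ≤ M)
    (hac : ∀ y : Fin B → (Fin n → ℝ), (∀ i, y i ∈ U) →
      h ((B : ℝ)⁻¹ • ∑ i, y i) ≤ ε + (1 / (B : ℝ)) * ∑ i, h (y i)) :
    ∀ A : Finset (Fin n → ℝ), ↑A ⊆ U →
      ∀ w : (Fin n → ℝ) → ℝ, (∀ x ∈ A, 0 ≤ w x) → (∑ x ∈ A, w x) = 1 →
      h (∑ x ∈ A, w x • x) ≤ phi B n * ε + ∑ x ∈ A, w x * h x := by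
  classical
  intro A
  induction A using Finset.strongInduction with
  | _ A IH =>
  intro hAU w hw0 hwsum
  set Ap := A.filter (fun x => 0 < w x) with hAp
  have hsub : Ap ⊆ A := Finset.filter_subset _ _
  have hzero : ∀ x ∈ A, x ∉ Ap → w x = 0 := by
    intro x hx hnx
    rw [hAp] at hnx
    simp only [Finset.mem_filter, not_and] at hnx
    exact le_antisymm (not_lt.mp (hnx hx)) (hw0 x hx)
  have hsum' : ∑ x ∈ Ap, w x = 1 := by
    rw [← hwsum]
    exact Finset.sum_subset hsub (fun x hx hnx => hzero x hx hnx)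
  have hbar' : ∑ x ∈ Ap, w x • x = ∑ x ∈ A, w x • x :=
    Finset.sum_subset hsub (fun x hx hnx => by rw [hzero x hx hnx, zero_smul])
  have hh' : ∑ x ∈ Ap, w x * h x = ∑ x ∈ A, w x * h x :=
    Finset.sum_subset hsub (fun x hx hnx => by rw [hzero x hx hnx, zero_mul])
  have hpos' : ∀ x ∈ Ap, 0 < w x := fun x hx => (Finset.mem_filter.mp hx).2
  have hApU : ↑Ap ⊆ U := fun x hx => hAU (hsub hx)
  rcases le_or_gt Ap.card (n+1) with hle | hgt
  · have hbig := bigM hB hUconv hε hbdd hac Ap hApU w hpos' hsum'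
    have hmono : phi B (Ap.card - 1) ≤ phi B n := phi_mono hB (by omega)
    have := mul_le_mul_of_nonneg_right hmono hε.le
    rw [← hbar', ← hh']
    linarith
  · obtain ⟨A', w', hA'sub, hA'lt, hpos'', hsum'', hbar'', hh''⟩ :=
      caratheodory_reduce h hpos' hsum' (by omega)
    have hss : A' ⊂ A := by
      have h1 : A' ⊂ Ap := lt_of_le_of_ne hA'sub
        (fun heq => by rw [heq] at hA'lt; exact lt_irrefl _ hA'lt)
      exact lt_of_lt_of_le h1 hsub
    have hIH := IH A' hss (fun x hx => hApU (hA'sub hx)) w'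
      (fun x hx => (hpos'' x hx).le) hsum''
    rw [← hbar', ← hh', ← hbar'']
    linarith [hh'']

theorem stmt9 (B n : ℕ) (hB : 2 ≤ B) (hn : 1 ≤ n)
    (U : Set (Fin n → ℝ)) (hUconv : Convex ℝ U)
    (ε : ℝ) (hε : 0 < ε) (h : (Fin n → ℝ) → ℝ)
    (hbdd : ∀ K ⊆ U, IsCompact K → ∃ M : ℝ, ∀ x ∈ K, h x ≤ M)
    (hac : ∀ y : Fin B → (Fin n → ℝ), (∀ i, y i ∈ U) →
      h ((B : ℝ)⁻¹ • ∑ i, y i) ≤ ε + (1 / (B : ℝ)) * ∑ i, h (y i)) :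
    (∃ g : (Fin n → ℝ) → ℝ, ConvexOn ℝ U g ∧
      ∀ x ∈ U, h x ≤ g x ∧ g x ≤ h x + kappa B n * ε) ∧
    (∃ g₀ : (Fin n → ℝ) → ℝ, ConvexOn ℝ U g₀ ∧
      ∀ x ∈ U, |h x - g₀ x| ≤ (kappa B n / 2) * ε) := by
  classical
  have hkp : kappa B n = phi B n := kappa_eq_phi hB hn
  set C : ℝ := phi B n * ε with hC
  set Cmb : (Fin n → ℝ) → Set ℝ := fun z =>
    {r | ∃ (A : Finset (Fin n → ℝ)) (w : (Fin n → ℝ) → ℝ), ↑A ⊆ U ∧ (∀ x ∈ A, 0 ≤ w x) ∧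
      (∑ x ∈ A, w x) = 1 ∧ (∑ x ∈ A, w x • x) = z ∧ r = ∑ x ∈ A, w x * h x} with hCmb
  have hCne : ∀ z ∈ U, h z ∈ Cmb z := by
    intro z hz
    refine ⟨{z}, fun _ => 1, ?_, ?_, ?_, ?_, ?_⟩
    · simpa using hz
    · intro x _; norm_num
    · simp
    · simp
    · simp
  have hClb : ∀ z, z ∈ U → ∀ r ∈ Cmb z, h z - C ≤ r := by
    intro z hz r hr
    obtain ⟨A, w, hAU', hw0, hws, hbar, rfl⟩ := hr
    have := allCombos hB hUconv hε hbdd hac A hAU' w hw0 hws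
    rw [hbar] at this
    rw [hC]
    linarith
  have hCbdd : ∀ z ∈ U, BddBelow (Cmb z) := fun z hz => ⟨h z - C, fun r hr => hClb z hz r hr⟩
  set g1 : (Fin n → ℝ) → ℝ := fun z => sInf (Cmb z) with hg1
  have hg1_le : ∀ z ∈ U, g1 z ≤ h z := fun z hz => csInf_le (hCbdd z hz) (hCne z hz)
  have hg1_ge : ∀ z ∈ U, h z - C ≤ g1 z := fun z hz => le_csInf ⟨h z, hCne z hz⟩ (hClb z hz)
  have hg1conv : ∀ z1 ∈ U, ∀ z2 ∈ U, ∀ a b : ℝ, 0 ≤ a → 0 ≤ b → a + b = 1 →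
      g1 (a • z1 + b • z2) ≤ a * g1 z1 + b * g1 z2 := by
    intro z1 hz1 z2 hz2 a b ha hb hab
    rcases eq_or_lt_of_le ha with rfl0 | ha'
    · have hb1 : b = 1 := by linarith
      rw [← rfl0, hb1]
      simp
    rcases eq_or_lt_of_le hb with rfl0 | hb'
    · have ha1 : a = 1 := by linarith
      rw [← rfl0, ha1]
      simp
    have hzU : a • z1 + b • z2 ∈ U := hUconv hz1 hz2 ha hb hab
    have key3 : ∀ r1 ∈ Cmb z1, ∀ r2 ∈ Cmb z2,
        sInf (Cmb (a • z1 + b • z2)) ≤ a * r1 + b * r2 := by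
      rintro r1 ⟨A1, w1, hA1U, hw10, hw1s, hbar1, rfl⟩ r2 ⟨A2, w2, hA2U, hw20, hw2s, hbar2, rfl⟩
      apply csInf_le (hCbdd _ hzU)
      refine ⟨A1 ∪ A2,
        fun x => a * (if x ∈ A1 then w1 x else 0) + b * (if x ∈ A2 then w2 x else 0),
        ?_, ?_, ?_, ?_, ?_⟩
      · intro x hx
        rcases Finset.mem_union.mp hx with h1 | h2
        · exact hA1U h1
        · exact hA2U h2
      · intro x _
        have i1 : (0:ℝ) ≤ (if x ∈ A1 then w1 x else 0) := by
          split
          · next hmem => exact hw10 x hmem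
          · exact le_refl 0
        have i2 : (0:ℝ) ≤ (if x ∈ A2 then w2 x else 0) := by
          split
          · next hmem => exact hw20 x hmem
          · exact le_refl 0
        positivity
      · rw [Finset.sum_add_distrib, ← Finset.mul_sum, ← Finset.mul_sum,
          sum_union_ite_left A1 A2 w1, sum_union_ite_right A1 A2 w2, hw1s, hw2s,
          mul_one, mul_one, hab]
      · have e1 : ∀ x : Fin n → ℝ,
            (a * (if x ∈ A1 then w1 x else 0) + b * (if x ∈ A2 then w2 x else 0)) • x
            = a • ((if x ∈ A1 then w1 x • x else 0)) + b • ((if x ∈ A2 then w2 x • x else 0)) := by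
          intro x
          rw [add_smul, mul_smul, mul_smul]
          congr 2 <;> (split <;> simp)
        rw [Finset.sum_congr rfl fun x _ => e1 x, Finset.sum_add_distrib,
          ← Finset.smul_sum, ← Finset.smul_sum,
          sum_union_ite_left A1 A2 (fun x => w1 x • x),
          sum_union_ite_right A1 A2 (fun x => w2 x • x), hbar1, hbar2]
      · have e2 : ∀ x : Fin n → ℝ,
            (a * (if x ∈ A1 then w1 x else 0) + b * (if x ∈ A2 then w2 x else 0)) * h x
            = a * ((if x ∈ A1 then w1 x * h x else 0)) + b * ((if x ∈ A2 then w2 x * h x else 0)) := by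
          intro x
          split <;> split <;> ring
        rw [Finset.sum_congr rfl fun x _ => e2 x, Finset.sum_add_distrib,
          ← Finset.mul_sum, ← Finset.mul_sum,
          sum_union_ite_left A1 A2 (fun x => w1 x * h x),
          sum_union_ite_right A1 A2 (fun x => w2 x * h x)]
    have step1 : ∀ r1 ∈ Cmb z1, sInf (Cmb (a • z1 + b • z2)) ≤ a * r1 + b * g1 z2 := by
      intro r1 hr1
      have hstep : (sInf (Cmb (a • z1 + b • z2)) - a * r1) / b ≤ g1 z2 := by
        apply le_csInf ⟨h z2, hCne z2 hz2⟩
        intro r2 hr2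
        rw [div_le_iff₀ hb']
        have := key3 r1 hr1 r2 hr2
        nlinarith
      rw [div_le_iff₀ hb'] at hstep
      nlinarith
    have hstep2 : (sInf (Cmb (a • z1 + b • z2)) - b * g1 z2) / a ≤ g1 z1 := by
      apply le_csInf ⟨h z1, hCne z1 hz1⟩
      intro r1 hr1
      rw [div_le_iff₀ ha']
      have := step1 r1 hr1
      nlinarith
    rw [div_le_iff₀ ha'] at hstep2
    nlinarith
  have hgen : ∀ c : ℝ, ConvexOn ℝ U (fun z => g1 z + c) := by
    intro c
    refine ⟨hUconv, ?_⟩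
    intro x hx y hy a b ha hb hab
    have := hg1conv x hx y hy a b ha hb hab
    simp only [smul_eq_mul]
    have e : a * (g1 x + c) + b * (g1 y + c) = a * g1 x + b * g1 y + (a + b) * c := by ring
    rw [e, hab, one_mul]
    linarith
  constructor
  · refine ⟨fun z => g1 z + C, hgen C, ?_⟩
    intro x hx
    dsimp only
    have h1 := hg1_le x hx
    have h2 := hg1_ge x hx
    rw [hkp, ← hC]
    constructor <;> linarith
  · refine ⟨fun z => g1 z + C / 2, hgen (C / 2), ?_⟩
    intro x hx
    dsimp only
    have h1 := hg1_le x hx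
    have h2 := hg1_ge x hx
    rw [abs_le]
    have e : kappa B n / 2 * ε = C / 2 := by rw [hkp, hC]; ring
    rw [e]
    constructor <;> linarith
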